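/- Let (z,w) be an admissible pair with a measure-preserving map P̃ : Ω → T satisfying z(x) - w(P̃(x)) = (β² - |x - P̃(x)|²)/(2β) a.e. on Ω. Then for every measure-preserving map P : Ω → T (i.e., ∫_Ω h(P(x)) I dx = ∫_T h L dp for all continuous h), we have ∫_Ω |x - P̃(x)|² I(x) dx ≤ ∫_Ω |x - P(x)|² I(x) dx. -/

import Mathlib

open MeasureTheory

private lemma bdd_mul_integrable {E : Type*} [MeasurableSpace E] {μ : Measure E}
    {Ω : Set E} (hΩ : MeasurableSet Ω) {g I : E → ℝ}
    (hg : AEStronglyMeasurable g (μ.restrict Ω)) (C : ℝ)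
    (hb : ∀ x ∈ Ω, |g x| ≤ C) (hI : IntegrableOn I Ω μ) :
    IntegrableOn (fun x => g x * I x) Ω μ := by
  apply Integrable.mono' ((hI.abs.const_mul C)) (hg.mul hI.1)
  filter_upwards [ae_restrict_mem hΩ] with x hx
  show ‖g x * I x‖ ≤ C * |I x|
  rw [Real.norm_eq_abs, abs_mul]
  exact mul_le_mul_of_nonneg_right (hb x hx) (abs_nonneg _)

theorem stmt_14 {n : ℕ} (Ω T : Set (EuclideanSpace ℝ (Fin n)))
    (hΩc : IsCompact Ω) (hΩne : Ω.Nonempty) (hTc : IsCompact T) (hTne : T.Nonempty)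
    (β : ℝ) (hβ : 0 < β)
    (I L : EuclideanSpace ℝ (Fin n) → ℝ)
    (hI0 : ∀ x ∈ Ω, 0 ≤ I x) (hL0 : ∀ p ∈ T, 0 ≤ L p)
    (hIint : IntegrableOn I Ω) (hLint : IntegrableOn L T)
    (hmass : ∫ x in Ω, I x = ∫ p in T, L p)
    (z w : EuclideanSpace ℝ (Fin n) → ℝ)
    (hzc : ContinuousOn z Ω) (hwc : ContinuousOn w T)
    (hadm : ∀ x ∈ Ω, ∀ p ∈ T, z x - w p ≥ (β ^ 2 - ‖x - p‖ ^ 2) / (2 * β))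
    (Pt : EuclideanSpace ℝ (Fin n) → EuclideanSpace ℝ (Fin n))
    (hPtm : Measurable Pt) (hPtT : ∀ x ∈ Ω, Pt x ∈ T)
    (heq : ∀ᵐ x ∂(volume.restrict Ω),
      z x - w (Pt x) = (β ^ 2 - ‖x - Pt x‖ ^ 2) / (2 * β))
    (hPtplan : ∀ h : EuclideanSpace ℝ (Fin n) → ℝ, Continuous h →
      ∫ x in Ω, h (Pt x) * I x = ∫ p in T, h p * L p) :
    ∀ P : EuclideanSpace ℝ (Fin n) → EuclideanSpace ℝ (Fin n), Measurable P →
      (∀ x ∈ Ω, P x ∈ T) →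
      (∀ h : EuclideanSpace ℝ (Fin n) → ℝ, Continuous h →
        ∫ x in Ω, h (P x) * I x = ∫ p in T, h p * L p) →
      (∫ x in Ω, ‖x - Pt x‖ ^ 2 * I x) ≤ ∫ x in Ω, ‖x - P x‖ ^ 2 * I x := by
  intro P hPm hPT hPplan
  have hΩm : MeasurableSet Ω := hΩc.measurableSet
  -- Tietze extension of w
  obtain ⟨W, hW⟩ := ContinuousMap.exists_restrict_eq (s := T) hTc.isClosed
    ⟨T.restrict w, hwc.restrict⟩
  have hWT : ∀ p ∈ T, W p = w p := by
    intro p hp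
    have := congrFun (congrArg ContinuousMap.toFun hW) ⟨p, hp⟩
    exact this
  -- bounds
  obtain ⟨x0, _, hx0⟩ := hΩc.exists_isMaxOn hΩne continuous_norm.continuousOn
  obtain ⟨p0, hp0T, hp0⟩ := hTc.exists_isMaxOn hTne continuous_norm.continuousOn
  obtain ⟨q0, hq0T, hq0⟩ := hTc.exists_isMaxOn hTne (hwc.abs)
  set R : ℝ := (‖x0‖ + ‖p0‖) ^ 2 with hR
  have hdist : ∀ x ∈ Ω, ∀ p ∈ T, |‖x - p‖ ^ 2| ≤ R := by
    intro x hx p hp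
    rw [abs_of_nonneg (by positivity)]
    have h1 : ‖x - p‖ ≤ ‖x0‖ + ‖p0‖ :=
      (norm_sub_le x p).trans (add_le_add (hx0 hx) (hp0 hp))
    exact pow_le_pow_left₀ (norm_nonneg _) h1 2
  set C : ℝ := |w q0| with hC
  have hWb : ∀ p ∈ T, |W p| ≤ C := fun p hp => by rw [hWT p hp]; exact hq0 hp
  -- measurability
  have hmPt : AEStronglyMeasurable (fun x => ‖x - Pt x‖ ^ 2) (volume.restrict Ω) :=
    (((measurable_id.sub hPtm).norm.pow_const 2)).aestronglyMeasurable
  have hmP : AEStronglyMeasurable (fun x => ‖x - P x‖ ^ 2) (volume.restrict Ω) :=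
    (((measurable_id.sub hPm).norm.pow_const 2)).aestronglyMeasurable
  have hmWPt : AEStronglyMeasurable (fun x => W (Pt x)) (volume.restrict Ω) :=
    (W.continuous.measurable.comp hPtm).aestronglyMeasurable
  have hmWP : AEStronglyMeasurable (fun x => W (P x)) (volume.restrict Ω) :=
    (W.continuous.measurable.comp hPm).aestronglyMeasurable
  -- integrability
  have if1 : IntegrableOn (fun x => ‖x - Pt x‖ ^ 2 * I x) Ω :=
    bdd_mul_integrable hΩm hmPt R (fun x hx => hdist x hx _ (hPtT x hx)) hIint
  have if2 : IntegrableOn (fun x => ‖x - P x‖ ^ 2 * I x) Ω :=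
    bdd_mul_integrable hΩm hmP R (fun x hx => hdist x hx _ (hPT x hx)) hIint
  have if3 : IntegrableOn (fun x => W (Pt x) * I x) Ω :=
    bdd_mul_integrable hΩm hmWPt C (fun x hx => hWb _ (hPtT x hx)) hIint
  have if4 : IntegrableOn (fun x => W (P x) * I x) Ω :=
    bdd_mul_integrable hΩm hmWP C (fun x hx => hWb _ (hPT x hx)) hIint
  -- equal transport integrals for W
  have hWeq : ∫ x in Ω, W (Pt x) * I x = ∫ x in Ω, W (P x) * I x := by
    rw [hPtplan W W.continuous, hPplan W W.continuous]
  -- pointwise a.e. inequality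
  have hpt : (fun x => ‖x - Pt x‖ ^ 2 * I x) ≤ᵐ[volume.restrict Ω]
      (fun x => ‖x - P x‖ ^ 2 * I x + (2 * β) * ((W (Pt x) - W (P x)) * I x)) := by
    filter_upwards [ae_restrict_mem hΩm, heq] with x hx hxeq
    have h1 : z x - w (P x) ≥ (β ^ 2 - ‖x - P x‖ ^ 2) / (2 * β) := hadm x hx _ (hPT x hx)
    have h2β : (0:ℝ) < 2 * β := by positivity
    have key : ‖x - Pt x‖ ^ 2 ≤ ‖x - P x‖ ^ 2 + (2 * β) * (W (Pt x) - W (P x)) := by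
      rw [hWT _ (hPtT x hx), hWT _ (hPT x hx)]
      have e1 : ‖x - Pt x‖ ^ 2 = β ^ 2 - (2 * β) * (z x - w (Pt x)) := by
        field_simp at hxeq; nlinarith [hxeq]
      have e2 : β ^ 2 - (2 * β) * (z x - w (P x)) ≤ ‖x - P x‖ ^ 2 := by
        rw [ge_iff_le, div_le_iff₀ h2β] at h1; nlinarith
      nlinarith
    have hI' : 0 ≤ I x := hI0 x hx
    nlinarith [mul_le_mul_of_nonneg_right key hI']
  -- conclude
  have ig : Integrable (fun x => (2 * β) * ((W (Pt x) - W (P x)) * I x)) (volume.restrict Ω) := by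
    have h := (if3.sub if4).const_mul (2 * β)
    exact h.congr (by filter_upwards with x; simp only [Pi.sub_apply]; ring)
  have hle := integral_mono_ae if1 (if2.add ig) hpt
  have e3 : ∫ x in Ω, (2 * β) * ((W (Pt x) - W (P x)) * I x)
      = (2 * β) * ((∫ x in Ω, W (Pt x) * I x) - ∫ x in Ω, W (P x) * I x) := by
    rw [integral_const_mul]
    congr 1
    rw [← integral_sub if3 if4]
    apply integral_congr_ae; filter_upwards with x; ring
  calc ∫ x in Ω, ‖x - Pt x‖ ^ 2 * I x
      ≤ ∫ x in Ω, (‖x - P x‖ ^ 2 * I x + (2 * β) * ((W (Pt x) - W (P x)) * I x)) := hle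
    _ = (∫ x in Ω, ‖x - P x‖ ^ 2 * I x)
        + ∫ x in Ω, (2 * β) * ((W (Pt x) - W (P x)) * I x) := integral_add if2 ig
    _ = ∫ x in Ω, ‖x - P x‖ ^ 2 * I x := by rw [e3, hWeq]; ring
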